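/- arXiv:1106.0053 — 4 statements merged into one kernel-verified Lean document; each statement's English description precedes it below -/
import Mathlib

section
/- Let K : ℝ → ℝ be continuous with K(t) ≤ 0 for all t, and let j : ℝ → ℝ be twice differentiable with j''(t) + K(t)·j(t) = 0 for all t ∈ ℝ. If j is bounded on ℝ (there is M with |j(t)| ≤ M for all t), then j'(t) = 0 and K(t)·j(t) = 0 for all t; in particular j is constant. -/
/-- a bounded solution of the Jacobi equation `j'' + K j = 0` with `K ≤ 0`
has `j' ≡ 0` and `K j ≡ 0`; in particular `j` is constant. -/
theorem stmt_2 (K j j' j'' : ℝ → ℝ)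
    (hK : Continuous K) (hKle : ∀ t, K t ≤ 0)
    (hj : ∀ t, HasDerivAt j (j' t) t)
    (hj' : ∀ t, HasDerivAt j' (j'' t) t)
    (hJacobi : ∀ t, j'' t + K t * j t = 0)
    (M : ℝ) (hbd : ∀ t, |j t| ≤ M) :
    (∀ t, j' t = 0) ∧ (∀ t, K t * j t = 0) ∧ (∀ s t, j s = j t) := by
  set f : ℝ → ℝ := fun t => j t * j' t with hfdef
  have hf : ∀ t, HasDerivAt f (j' t ^ 2 - K t * j t ^ 2) t := by
    intro t
    have h := (hj t).mul (hj' t)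
    have hrw : j'' t = -(K t * j t) := by linarith [hJacobi t]
    refine h.congr_deriv ?_
    rw [hrw]; ring
  have hf0 : ∀ t, 0 ≤ j' t ^ 2 - K t * j t ^ 2 := by
    intro t
    have h2 : K t * j t ^ 2 ≤ 0 := mul_nonpos_of_nonpos_of_nonneg (hKle t) (sq_nonneg _)
    nlinarith [sq_nonneg (j' t)]
  have hfd : Differentiable ℝ f := fun t => (hf t).differentiableAt
  have hfderiv : ∀ t, deriv f t = j' t ^ 2 - K t * j t ^ 2 := fun t => (hf t).deriv
  have hfmono : Monotone f := by
    apply monotone_of_deriv_nonneg hfd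
    intro t; rw [hfderiv t]; exact hf0 t
  have hM : 0 ≤ M := le_trans (abs_nonneg _) (hbd 0)
  have hfzero : ∀ t, f t = 0 := by
    intro t0
    by_contra hne
    set h : ℝ → ℝ := fun t => j t ^ 2 - 2 * f t0 * t with hhdef
    have hh : ∀ t, HasDerivAt h (2 * f t - 2 * f t0) t := by
      intro t
      have h1 : HasDerivAt (fun t => j t ^ 2) (2 * j t ^ 1 * j' t) t := (hj t).pow 2
      have h2 : HasDerivAt (fun t : ℝ => 2 * f t0 * t) (2 * f t0) t := by
        simpa using (hasDerivAt_id t).const_mul (2 * f t0)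
      have := h1.sub h2
      refine this.congr_deriv ?_
      simp [hfdef]; ring
    have hhd : Differentiable ℝ h := fun t => (hh t).differentiableAt
    have hhderiv : ∀ t, deriv h t = 2 * f t - 2 * f t0 := fun t => (hh t).deriv
    obtain ⟨T, hT⟩ : ∃ T, T = t0 + (M ^ 2 + 1) / (2 * f t0) := ⟨_, rfl⟩
    have hft0 : f t0 ≠ 0 := hne
    have hTt0 : 2 * f t0 * (T - t0) = M ^ 2 + 1 := by
      rw [hT]
      field_simp
      ring
    have hkey : h t0 ≤ h T := by
      rcases lt_or_gt_of_ne hne with hneg | hpos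
      · -- f t0 < 0, T ≤ t0, h antitone on Iic t0
        have hTle : T ≤ t0 := by
          have : (M ^ 2 + 1) / (2 * f t0) ≤ 0 :=
            div_nonpos_of_nonneg_of_nonpos (by positivity) (by linarith)
          linarith
        have hanti : AntitoneOn h (Set.Iic t0) := by
          apply antitoneOn_of_deriv_nonpos (convex_Iic t0) hhd.continuous.continuousOn
            (hhd.differentiableOn)
          intro x hx
          rw [interior_Iic] at hx
          rw [hhderiv x]
          have := hfmono (le_of_lt hx)
          linarith
        exact hanti (Set.mem_Iic.mpr hTle) (Set.mem_Iic.mpr le_rfl) hTle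
      · -- f t0 > 0, t0 ≤ T, h monotone on Ici t0
        have hTge : t0 ≤ T := by
          have : 0 ≤ (M ^ 2 + 1) / (2 * f t0) :=
            div_nonneg (by positivity) (by linarith)
          linarith
        have hmono : MonotoneOn h (Set.Ici t0) := by
          apply monotoneOn_of_deriv_nonneg (convex_Ici t0) hhd.continuous.continuousOn
            (hhd.differentiableOn)
          intro x hx
          rw [interior_Ici] at hx
          rw [hhderiv x]
          have := hfmono (le_of_lt hx)
          linarith
        exact hmono (Set.mem_Ici.mpr le_rfl) (Set.mem_Ici.mpr hTge) hTge
    have hjT : |j T| ≤ M := hbd T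
    have hjT2 : j T ^ 2 ≤ M ^ 2 := by
      have := abs_le.mp hjT
      nlinarith
    have : j T ^ 2 - 2 * f t0 * T ≥ j t0 ^ 2 - 2 * f t0 * t0 := hkey
    nlinarith [sq_nonneg (j t0)]
  have hderiv0 : ∀ t, j' t ^ 2 - K t * j t ^ 2 = 0 := by
    intro t
    have h1 : f = fun _ => (0 : ℝ) := funext hfzero
    have h2 := hf t
    rw [h1] at h2
    have h3 : HasDerivAt (fun _ : ℝ => (0 : ℝ)) 0 t := hasDerivAt_const t 0
    exact (h2.unique h3)
  have hj'0 : ∀ t, j' t = 0 := by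
    intro t
    have := hderiv0 t
    have h2 : K t * j t ^ 2 ≤ 0 := mul_nonpos_of_nonpos_of_nonneg (hKle t) (sq_nonneg _)
    nlinarith [sq_nonneg (j' t)]
  have hKj0 : ∀ t, K t * j t = 0 := by
    intro t
    have := hderiv0 t
    have hjt' := hj'0 t
    have h4 : K t * j t ^ 2 = 0 := by nlinarith
    rcases eq_or_ne (j t) 0 with h | h
    · rw [h, mul_zero]
    · have : K t * j t * j t = 0 := by nlinarith
      exact (mul_eq_zero.mp this).resolve_right h
  refine ⟨hj'0, hKj0, ?_⟩
  have hconst : ∀ s t, j s = j t := by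
    intro s t
    have : ∀ x, deriv j x = 0 := fun x => by rw [(hj x).deriv, hj'0 x]
    have hdiff : Differentiable ℝ j := fun x => (hj x).differentiableAt
    have := is_const_of_deriv_eq_zero hdiff this s t
    exact this
  exact hconst
end

section
/- Let K : ℝ → ℝ be continuous, τ > 0, and let u : ℝ → ℝ be differentiable with u(t + τ) = u(t) for all t and u'(t) + u(t)² + K(t) = 0 for all t ∈ ℝ. Then (1/τ)·∫₀^τ u(t)² dt = −(1/τ)·∫₀^τ K(t) dt, and (1/τ)·∫₀^τ u(t) dt ≤ √( −(1/τ)·∫₀^τ K(t) dt ). -/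
/-- integrating the Riccati equation `u' + u² + K = 0` over a period, and
the Schwarz inequality (Lemma 2.9). -/
theorem stmt_3 (K u u' : ℝ → ℝ) (τ : ℝ)
    (hK : Continuous K) (hτ : 0 < τ)
    (hu : ∀ t, HasDerivAt u (u' t) t)
    (hper : ∀ t, u (t + τ) = u t)
    (hric : ∀ t, u' t + u t ^ 2 + K t = 0) :
    (1 / τ) * ∫ t in (0:ℝ)..τ, u t ^ 2 = -((1 / τ) * ∫ t in (0:ℝ)..τ, K t) ∧
    (1 / τ) * ∫ t in (0:ℝ)..τ, u t ≤
      Real.sqrt (-((1 / τ) * ∫ t in (0:ℝ)..τ, K t)) := by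
  have hucont : Continuous u := by
    rw [continuous_iff_continuousAt]
    exact fun t => (hu t).continuousAt
  have hu'eq : u' = fun t => -(u t ^ 2 + K t) := by
    funext t; have := hric t; linarith
  have hu'cont : Continuous u' := by
    rw [hu'eq]; exact ((hucont.pow 2).add hK).neg
  have hint : ∫ t in (0:ℝ)..τ, u' t = u τ - u 0 :=
    intervalIntegral.integral_eq_sub_of_hasDerivAt (fun t _ => hu t)
      (hu'cont.intervalIntegrable 0 τ)
  have huτ : u τ = u 0 := by have := hper 0; simpa using this
  have hint0 : ∫ t in (0:ℝ)..τ, u' t = 0 := by rw [hint, huτ, sub_self]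
  have hiu2 : IntervalIntegrable (fun t => u t ^ 2) MeasureTheory.volume 0 τ :=
    (hucont.pow 2).intervalIntegrable 0 τ
  have hiK : IntervalIntegrable K MeasureTheory.volume 0 τ := hK.intervalIntegrable 0 τ
  have hiu : IntervalIntegrable u MeasureTheory.volume 0 τ := hucont.intervalIntegrable 0 τ
  have hiu' : IntervalIntegrable u' MeasureTheory.volume 0 τ := hu'cont.intervalIntegrable 0 τ
  have hSint : ∫ t in (0:ℝ)..τ, u t ^ 2 = -∫ t in (0:ℝ)..τ, K t := by
    have h : ∀ t, u t ^ 2 = -(u' t) - K t := fun t => by have := hric t; linarith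
    calc ∫ t in (0:ℝ)..τ, u t ^ 2 = ∫ t in (0:ℝ)..τ, (-(u' t) - K t) := by
          apply intervalIntegral.integral_congr; intro t _; exact h t
      _ = (∫ t in (0:ℝ)..τ, -(u' t)) - ∫ t in (0:ℝ)..τ, K t :=
          intervalIntegral.integral_sub hiu'.neg hiK
      _ = -∫ t in (0:ℝ)..τ, K t := by
          rw [intervalIntegral.integral_neg, hint0]; ring
  have hτ' : τ ≠ 0 := ne_of_gt hτ
  constructor
  · rw [hSint]; ring
  · set I := ∫ t in (0:ℝ)..τ, u t with hI
    set S := ∫ t in (0:ℝ)..τ, u t ^ 2 with hS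
    set m := (1 / τ) * I with hm
    have hIm : I = m * τ := by rw [hm, one_div, inv_mul_eq_div, div_mul_cancel₀ _ hτ']
    -- expand ∫ (u - m)^2
    have hexp : ∫ t in (0:ℝ)..τ, (u t - m) ^ 2 = S - 2 * m * I + m ^ 2 * τ := by
      have h1 : ∀ t, (u t - m) ^ 2 = u t ^ 2 - 2 * m * u t + m ^ 2 := fun t => by ring
      calc ∫ t in (0:ℝ)..τ, (u t - m) ^ 2
          = ∫ t in (0:ℝ)..τ, (u t ^ 2 - 2 * m * u t + m ^ 2) := by
            apply intervalIntegral.integral_congr; intro t _; exact h1 t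
        _ = (∫ t in (0:ℝ)..τ, (u t ^ 2 - 2 * m * u t)) + ∫ t in (0:ℝ)..τ, (m ^ 2 : ℝ) := by
            exact intervalIntegral.integral_add (hiu2.sub ((hiu.const_mul _)))
              (intervalIntegrable_const)
        _ = S - 2 * m * I + m ^ 2 * τ := by
            rw [intervalIntegral.integral_sub hiu2 (hiu.const_mul _),
              intervalIntegral.integral_const_mul, intervalIntegral.integral_const]
            simp [hS, hI]; ring
    have hnn : 0 ≤ ∫ t in (0:ℝ)..τ, (u t - m) ^ 2 :=
      intervalIntegral.integral_nonneg hτ.le (fun t _ => sq_nonneg _)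
    rw [hexp, hIm] at hnn
    have hm2 : m ^ 2 ≤ (1 / τ) * S := by
      have : m ^ 2 * τ ≤ S := by nlinarith
      rw [div_mul_eq_mul_div, le_div_iff₀ hτ, one_mul] at *
      linarith [this]
    have hmle : m ≤ Real.sqrt (m ^ 2) := by
      rw [Real.sqrt_sq_eq_abs]; exact le_abs_self m
    calc m ≤ Real.sqrt (m ^ 2) := hmle
      _ ≤ Real.sqrt ((1 / τ) * S) := Real.sqrt_le_sqrt hm2
      _ = Real.sqrt (-((1 / τ) * ∫ t in (0:ℝ)..τ, K t)) := by rw [hSint]; ring_nf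
end

section
/- Let k ≥ 0 and let K : ℝ → ℝ be continuous with −k² ≤ K(t) for all t. Let u : ℝ → ℝ be differentiable on all of ℝ with u'(t) = −u(t)² − K(t) for all t and u(t) ≥ 0 for all t. Then u(t) ≤ k for all t ∈ ℝ. -/
private lemma stmt_4_aux (k : ℝ) (hk : 0 < k) (K u u' : ℝ → ℝ)
    (hKlb : ∀ t, -k ^ 2 ≤ K t)
    (hu : ∀ t, HasDerivAt u (u' t) t)
    (hric : ∀ t, u' t = -(u t) ^ 2 - K t)
    (hnn : ∀ t, 0 ≤ u t) :
    ∀ t, u t ≤ k := by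
  intro t₀
  by_contra h
  push_neg at h
  have hpos : ∀ t, 0 < u t + k := fun t => add_pos_of_nonneg_of_pos (hnn t) hk
  set ψ : ℝ → ℝ := fun t => (u t - k) / (u t + k) with hψdef
  set g : ℝ → ℝ := fun t => Real.exp (2 * k * t) * ψ t with hgdef
  have hψ : ∀ t, HasDerivAt ψ ((u' t * (u t + k) - (u t - k) * u' t) / (u t + k) ^ 2) t := by
    intro t
    exact ((hu t).sub_const k).div ((hu t).add_const k) (hpos t).ne'
  have hexp : ∀ t : ℝ, HasDerivAt (fun s => Real.exp (2 * k * s)) (Real.exp (2 * k * t) * (2 * k)) t := by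
    intro t
    exact (HasDerivAt.const_mul (2 * k) (hasDerivAt_id t)).exp.congr_deriv (by simp only [id_eq]; ring)
  have hg : ∀ t, HasDerivAt g
      (Real.exp (2 * k * t) * (2 * k) * ψ t
        + Real.exp (2 * k * t) * ((u' t * (u t + k) - (u t - k) * u' t) / (u t + k) ^ 2)) t := by
    intro t
    exact (hexp t).mul (hψ t)
  have hg' : ∀ t, deriv g t ≤ 0 := by
    intro t
    rw [(hg t).deriv]
    have h1 : u' t * (u t + k) - (u t - k) * u' t = 2 * k * u' t := by ring
    have h2 : (u t - k) * (u t + k) + u' t ≤ 0 := by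
      have := hKlb t
      nlinarith [hric t]
    have hd2 : (0:ℝ) < (u t + k) ^ 2 := pow_pos (hpos t) 2
    have key : (2 * k) * ψ t + (u' t * (u t + k) - (u t - k) * u' t) / (u t + k) ^ 2
        = 2 * k * ((u t - k) * (u t + k) + u' t) / (u t + k) ^ 2 := by
      rw [h1, hψdef]
      field_simp [(hpos t).ne']
    have : Real.exp (2 * k * t) * (2 * k) * ψ t
        + Real.exp (2 * k * t) * ((u' t * (u t + k) - (u t - k) * u' t) / (u t + k) ^ 2)
        = Real.exp (2 * k * t) * (2 * k * ((u t - k) * (u t + k) + u' t) / (u t + k) ^ 2) := by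
      rw [← key]; ring
    rw [this]
    apply mul_nonpos_of_nonneg_of_nonpos (Real.exp_nonneg _)
    apply div_nonpos_of_nonpos_of_nonneg _ hd2.le
    nlinarith
  have hanti : Antitone g :=
    antitone_of_deriv_nonpos (fun t => (hg t).differentiableAt) hg'
  set c : ℝ := g t₀ with hcdef
  have hc : 0 < c := by
    apply mul_pos (Real.exp_pos _)
    apply div_pos (by linarith) (hpos t₀)
  set t₁ : ℝ := min t₀ (Real.log c / (2 * k) - 1) with ht₁def
  have hle : c ≤ g t₁ := hanti (min_le_left _ _)
  have hψle : ψ t₁ ≤ 1 := by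
    rw [hψdef, div_le_one (hpos t₁)]
    linarith
  have hexp_lt : Real.exp (2 * k * t₁) < c := by
    have h2k : (0:ℝ) < 2 * k := by linarith
    have : 2 * k * t₁ ≤ 2 * k * (Real.log c / (2 * k) - 1) :=
      mul_le_mul_of_nonneg_left (min_le_right _ _) h2k.le
    have h4 : 2 * k * (Real.log c / (2 * k) - 1) = Real.log c - 2 * k := by
      field_simp
    calc Real.exp (2 * k * t₁) ≤ Real.exp (Real.log c - 2 * k) := by
          apply Real.exp_le_exp.2; linarith
      _ < Real.exp (Real.log c) := Real.exp_lt_exp.2 (by linarith)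
      _ = c := Real.exp_log hc
  have : g t₁ < c := by
    calc g t₁ = Real.exp (2 * k * t₁) * ψ t₁ := rfl
      _ ≤ Real.exp (2 * k * t₁) * 1 :=
          mul_le_mul_of_nonneg_left hψle (Real.exp_nonneg _)
      _ = Real.exp (2 * k * t₁) := mul_one _
      _ < c := hexp_lt
  linarith

/-- a globally defined nonnegative solution of the Riccati equation
`u' = -u² - K` with `K ≥ -k²` satisfies `u ≤ k` (Eberlein's estimate). -/
theorem stmt_4 (k : ℝ) (hk : 0 ≤ k) (K u u' : ℝ → ℝ)
    (hK : Continuous K) (hKlb : ∀ t, -k ^ 2 ≤ K t)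
    (hu : ∀ t, HasDerivAt u (u' t) t)
    (hric : ∀ t, u' t = -(u t) ^ 2 - K t)
    (hnn : ∀ t, 0 ≤ u t) :
    ∀ t, u t ≤ k := by
  intro t
  apply le_of_forall_pos_le_add
  intro ε hε
  have hk' : 0 < k + ε := by linarith
  exact stmt_4_aux (k + ε) hk' K u u' (fun s => le_trans (by nlinarith) (hKlb s)) hu hric hnn t
end

section
/- Let ι be a nonempty index set, H, C ≥ 0, and h, χ : ι → ℝ with 0 ≤ h(i) ≤ H and 0 ≤ χ(i) ≤ C for all i. Define P : ℝ → ℝ by P(q) = ⨆ᵢ (h(i) − q·χ(i)). Then P(q)/q → −(⨅ᵢ χ(i)) as q → +∞, and P(q)/q → −(⨆ᵢ χ(i)) as q → −∞. -/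
/-- asymptotic slopes of the abstract pressure function
(Proposition 3.1 (2)): `P(q)/q → -⨅ χ` as `q → ∞` and `P(q)/q → -⨆ χ` as `q → -∞`. -/
theorem stmt_6 {ι : Type*} [Nonempty ι] (H C : ℝ) (hH : 0 ≤ H) (hC : 0 ≤ C)
    (h χ : ι → ℝ) (hh : ∀ i, h i ∈ Set.Icc 0 H) (hχ : ∀ i, χ i ∈ Set.Icc 0 C) :
    Filter.Tendsto (fun q : ℝ => (⨆ i, (h i - q * χ i)) / q) Filter.atTop
      (nhds (-(⨅ i, χ i))) ∧
    Filter.Tendsto (fun q : ℝ => (⨆ i, (h i - q * χ i)) / q) Filter.atBot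
      (nhds (-(⨆ i, χ i))) := by
  have hbb : BddBelow (Set.range χ) := ⟨0, by rintro x ⟨i, rfl⟩; exact (hχ i).1⟩
  have hba : BddAbove (Set.range χ) := ⟨C, by rintro x ⟨i, rfl⟩; exact (hχ i).2⟩
  set L := ⨅ i, χ i with hL
  set U := ⨆ i, χ i with hU
  -- bounds for q > 0
  have bd1 : ∀ q : ℝ, 0 < q → -(q * L) ≤ (⨆ i, (h i - q * χ i)) ∧
      (⨆ i, (h i - q * χ i)) ≤ H - q * L := by
    intro q hq
    have hb : BddAbove (Set.range fun i => h i - q * χ i) := by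
      refine ⟨H, ?_⟩
      rintro x ⟨i, rfl⟩
      have : 0 ≤ q * χ i := mul_nonneg hq.le (hχ i).1
      show h i - q * χ i ≤ H
      linarith [(hh i).2]
    constructor
    · have key : -(q * L) = ⨆ i, (-q) * χ i := by
        rw [show -(q * L) = (-q) * L by ring, hL, Real.mul_iInf_of_nonpos (by linarith)]
      rw [key]
      exact ciSup_mono hb fun i => by nlinarith [(hh i).1]
    · refine ciSup_le fun i => ?_
      have : q * L ≤ q * χ i := mul_le_mul_of_nonneg_left (ciInf_le hbb i) hq.le
      linarith [(hh i).2]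
  -- bounds for q < 0
  have bd2 : ∀ q : ℝ, q < 0 → -(q * U) ≤ (⨆ i, (h i - q * χ i)) ∧
      (⨆ i, (h i - q * χ i)) ≤ H - q * U := by
    intro q hq
    have hb : BddAbove (Set.range fun i => h i - q * χ i) := by
      refine ⟨H - q * C, ?_⟩
      rintro x ⟨i, rfl⟩
      have h1 : q * C ≤ q * χ i := mul_le_mul_of_nonpos_left (hχ i).2 hq.le
      show h i - q * χ i ≤ H - q * C
      linarith [(hh i).2]
    constructor
    · have key : -(q * U) = ⨆ i, (-q) * χ i := by
        rw [show -(q * U) = (-q) * U by ring, hU, Real.mul_iSup_of_nonneg (by linarith)]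
      rw [key]
      exact ciSup_mono hb fun i => by nlinarith [(hh i).1]
    · refine ciSup_le fun i => ?_
      have : q * U ≤ q * χ i := mul_le_mul_of_nonpos_left (le_ciSup hba i) hq.le
      linarith [(hh i).2]
  constructor
  · have hlo : ∀ᶠ q : ℝ in Filter.atTop, -L ≤ (⨆ i, (h i - q * χ i)) / q := by
      filter_upwards [Filter.eventually_gt_atTop 0] with q hq
      rw [le_div_iff₀ hq]
      have := (bd1 q hq).1; linarith
    have hhi : ∀ᶠ q : ℝ in Filter.atTop, (⨆ i, (h i - q * χ i)) / q ≤ H / q - L := by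
      filter_upwards [Filter.eventually_gt_atTop 0] with q hq
      rw [div_le_iff₀ hq]
      calc (⨆ i, (h i - q * χ i)) ≤ H - q * L := (bd1 q hq).2
        _ = (H / q - L) * q := by field_simp
    have h1 : Filter.Tendsto (fun q : ℝ => H / q - L) Filter.atTop (nhds (-L)) := by
      have := tendsto_inv_atTop_zero.const_mul H
      simpa [div_eq_mul_inv] using this.sub (tendsto_const_nhds (x := L))
    exact tendsto_of_tendsto_of_tendsto_of_le_of_le' tendsto_const_nhds h1 hlo hhi
  · have hlo : ∀ᶠ q : ℝ in Filter.atBot, H / q - U ≤ (⨆ i, (h i - q * χ i)) / q := by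
      filter_upwards [Filter.eventually_lt_atBot 0] with q hq
      rw [le_div_iff_of_neg hq]
      calc (⨆ i, (h i - q * χ i)) ≤ H - q * U := (bd2 q hq).2
        _ = (H / q - U) * q := by field_simp [hq.ne]
    have hhi : ∀ᶠ q : ℝ in Filter.atBot, (⨆ i, (h i - q * χ i)) / q ≤ -U := by
      filter_upwards [Filter.eventually_lt_atBot 0] with q hq
      rw [div_le_iff_of_neg hq]
      have := (bd2 q hq).1; linarith
    have h1 : Filter.Tendsto (fun q : ℝ => H / q - U) Filter.atBot (nhds (-U)) := by
      have h0 : Filter.Tendsto (fun q : ℝ => H / q) Filter.atBot (nhds 0) := by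
        have := ((Filter.tendsto_neg_atBot_atTop (G := ℝ)).inv_tendsto_atTop).const_mul H
        simpa [div_eq_mul_inv, Pi.inv_def, inv_neg, mul_neg, neg_neg] using this.neg
      simpa using h0.sub (tendsto_const_nhds (x := U))
    exact tendsto_of_tendsto_of_tendsto_of_le_of_le' h1 tendsto_const_nhds hlo hhi
end
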